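/- Let Γ be symmetric positive definite, n ∈ ℝ^d, α, β ≥ 0. Along solutions of the ODE ṁ = −(αI + βΣ(t))Γ⁻¹(m − n) where Σ(t) is symmetric with Γ^{-1/2}Σ(t)Γ^{-1/2} ≥ b_min I for all t with b_min > 0, the quantity H_m(m) = (1/2)(m−n)·Γ⁻¹(m−n) satisfies (d/dt)H_m(m(t)) ≤ −2(α·ν_min(Γ⁻¹) + β·b_min)·H_m(m(t)), and hence H_m(m(t)) ≤ e^{−2(α ν_min(Γ⁻¹)+β b_min)t} H_m(m(0)). -/

import Mathlib

open Matrix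
namespace Matrix.PosSemidef
open scoped ComplexOrder
noncomputable def sqrt {n 𝕜 : Type*} [Fintype n] [RCLike 𝕜] [DecidableEq n]
    {A : Matrix n n 𝕜} (hA : A.PosSemidef) : Matrix n n 𝕜 :=
  hA.1.eigenvectorUnitary.1 * diagonal ((↑) ∘ (√·) ∘ hA.1.eigenvalues) *
  (star hA.1.eigenvectorUnitary : Matrix n n 𝕜)
end Matrix.PosSemidef

open scoped ComplexOrder in
private lemma psd_sqrt_herm {n 𝕜 : Type*} [Fintype n] [RCLike 𝕜] [DecidableEq n]
    {A : Matrix n n 𝕜} (hA : A.PosSemidef) : hA.sqrt.IsHermitian := by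
  unfold Matrix.PosSemidef.sqrt Matrix.IsHermitian
  rw [conjTranspose_mul, conjTranspose_mul, diagonal_conjTranspose, ← star_eq_conjTranspose,
    ← star_eq_conjTranspose, star_star, mul_assoc]
  congr 3
  funext i
  simp

open scoped ComplexOrder in
private lemma psd_sqrt_mul_self {n 𝕜 : Type*} [Fintype n] [RCLike 𝕜] [DecidableEq n]
    {A : Matrix n n 𝕜} (hA : A.PosSemidef) : hA.sqrt * hA.sqrt = A := by
  unfold Matrix.PosSemidef.sqrt
  conv_rhs => rw [hA.1.spectral_theorem]
  rw [Unitary.conjStarAlgAut_apply]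
  have hU : (star hA.1.eigenvectorUnitary : Matrix n n 𝕜) * hA.1.eigenvectorUnitary.1 = 1 :=
    Unitary.coe_star_mul_self _
  calc _ = hA.1.eigenvectorUnitary.1 * (diagonal ((↑) ∘ (√·) ∘ hA.1.eigenvalues) *
        ((star hA.1.eigenvectorUnitary : Matrix n n 𝕜) * hA.1.eigenvectorUnitary.1) *
        diagonal ((↑) ∘ (√·) ∘ hA.1.eigenvalues)) *
        (star hA.1.eigenvectorUnitary : Matrix n n 𝕜) := by simp only [mul_assoc]
    _ = _ := by
      rw [hU, mul_one, diagonal_mul_diagonal]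
      congr 3
      funext i
      simp only [Function.comp_apply]
      rw [← RCLike.ofReal_mul, Real.mul_self_sqrt (hA.eigenvalues_nonneg i)]


private lemma dot_symm'' {d : ℕ} (A : Matrix (Fin d) (Fin d) ℝ) (hA : Aᵀ = A)
    (a b : Fin d → ℝ) : a ⬝ᵥ (A *ᵥ b) = b ⬝ᵥ (A *ᵥ a) := by
  rw [dotProduct_mulVec, ← mulVec_transpose, hA, dotProduct_comm]

private lemma hasDerivAt_quad {d : ℕ} (A : Matrix (Fin d) (Fin d) ℝ) (hA : Aᵀ = A)
    {y : ℝ → Fin d → ℝ} {v : Fin d → ℝ} {t : ℝ} (hy : HasDerivAt y v t) :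
    HasDerivAt (fun s => (1/2 : ℝ) * (y s ⬝ᵥ (A *ᵥ y s))) (v ⬝ᵥ (A *ᵥ y t)) t := by
  have hyi : ∀ i, HasDerivAt (fun s => y s i) (v i) t := by
    intro i
    have := (ContinuousLinearMap.proj (R := ℝ) (φ := fun _ : Fin d => ℝ) i).hasFDerivAt.comp_hasDerivAt t hy
    exact this
  have key : HasDerivAt (fun s => (1/2 : ℝ) * ∑ i, y s i * ∑ j, A i j * y s j)
      ((1/2 : ℝ) * ∑ i, (v i * ∑ j, A i j * y t j + y t i * ∑ j, A i j * v j)) t := by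
    apply HasDerivAt.const_mul
    apply HasDerivAt.fun_sum
    intro i _
    exact (hyi i).mul (HasDerivAt.fun_sum fun j _ => (hyi j).const_mul (A i j))
  have hfun : (fun s => (1/2 : ℝ) * (y s ⬝ᵥ (A *ᵥ y s)))
      = (fun s => (1/2 : ℝ) * ∑ i, y s i * ∑ j, A i j * y s j) := by
    funext s
    simp [dotProduct, mulVec]
  have hval : (1/2 : ℝ) * ∑ i, (v i * ∑ j, A i j * y t j + y t i * ∑ j, A i j * v j)
      = v ⬝ᵥ (A *ᵥ y t) := by
    have h1 : (∑ i, v i * ∑ j, A i j * y t j) = v ⬝ᵥ (A *ᵥ y t) := by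
      simp [dotProduct, mulVec]
    have h2 : (∑ i, y t i * ∑ j, A i j * v j) = y t ⬝ᵥ (A *ᵥ v) := by
      simp [dotProduct, mulVec]
    rw [Finset.sum_add_distrib, h1, h2, dot_symm'' A hA (y t) v]
    ring
  rw [hfun, ← hval]
  exact key

theorem mean_decay (d : ℕ) (Γ : Matrix (Fin d) (Fin d) ℝ) (hΓ : Γ.PosDef)
    (n : Fin d → ℝ) (α β : ℝ) (hα : 0 ≤ α) (hβ : 0 ≤ β)
    (Sg : ℝ → Matrix (Fin d) (Fin d) ℝ) (hScont : Continuous Sg)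
    (hSpos : ∀ t, (Sg t).PosDef)
    (bmin : ℝ) (hbmin : 0 < bmin)
    (hSlow : ∀ t (x : Fin d → ℝ),
      bmin * (x ⬝ᵥ x) ≤
        x ⬝ᵥ (((hΓ.posSemidef.sqrt)⁻¹ * Sg t * (hΓ.posSemidef.sqrt)⁻¹) *ᵥ x))
    (νmin : ℝ)
    (hνlow : ∀ x : Fin d → ℝ, νmin * (x ⬝ᵥ x) ≤ x ⬝ᵥ (Γ⁻¹ *ᵥ x))
    (hνeig : ∃ x : Fin d → ℝ, x ≠ 0 ∧ Γ⁻¹ *ᵥ x = νmin • x)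
    (m : ℝ → (Fin d → ℝ))
    (hm : ∀ t, HasDerivAt m
      (-(α • (Γ⁻¹ *ᵥ (m t - n)) + β • ((Sg t) *ᵥ (Γ⁻¹ *ᵥ (m t - n))))) t)
    (H : (Fin d → ℝ) → ℝ)
    (hH : ∀ v, H v = (1 / 2 : ℝ) * ((v - n) ⬝ᵥ (Γ⁻¹ *ᵥ (v - n)))) :
    (∀ t, 0 ≤ t →
      deriv (fun s => H (m s)) t ≤ -(2 * (α * νmin + β * bmin)) * H (m t)) ∧
    (∀ t, 0 ≤ t →
      H (m t) ≤ Real.exp (-(2 * (α * νmin + β * bmin)) * t) * H (m 0)) := by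
  set c : ℝ := 2 * (α * νmin + β * bmin) with hc
  -- symmetry facts
  have hΓsymm : Γᵀ = Γ := by
    have := hΓ.isHermitian.eq
    rwa [conjTranspose_eq_transpose_of_trivial] at this
  have hAsymm : (Γ⁻¹)ᵀ = Γ⁻¹ := by
    have := hΓ.inv.isHermitian.eq
    rwa [conjTranspose_eq_transpose_of_trivial] at this
  have hΓdet : IsUnit Γ.det := isUnit_iff_ne_zero.mpr hΓ.det_pos.ne'
  -- notation
  set y : ℝ → Fin d → ℝ := fun s => m s - n with hy
  set u : ℝ → Fin d → ℝ := fun s => Γ⁻¹ *ᵥ (y s) with hu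
  -- the square root T of Γ⁻¹
  set T : Matrix (Fin d) (Fin d) ℝ := (hΓ.inv.posSemidef).sqrt with hT
  have hTsymm : Tᵀ = T := by
    have := (psd_sqrt_herm hΓ.inv.posSemidef).eq
    rwa [conjTranspose_eq_transpose_of_trivial] at this
  have hTT : T * T = Γ⁻¹ := psd_sqrt_mul_self hΓ.inv.posSemidef
  -- the square root S of Γ
  set S : Matrix (Fin d) (Fin d) ℝ := hΓ.posSemidef.sqrt with hS
  have hSsymm : Sᵀ = S := by
    have := (psd_sqrt_herm hΓ.posSemidef).eq
    rwa [conjTranspose_eq_transpose_of_trivial] at this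
  have hSS : S * S = Γ := psd_sqrt_mul_self hΓ.posSemidef
  have hSdet : IsUnit S.det := by
    have : S.det * S.det = Γ.det := by rw [← det_mul, hSS]
    refine isUnit_iff_ne_zero.mpr fun h => ?_
    rw [h, mul_zero] at this
    exact hΓ.det_pos.ne' this.symm
  have hSinvS : S⁻¹ * S = 1 := nonsing_inv_mul S hSdet
  have hSinvSymm : (S⁻¹)ᵀ = S⁻¹ := by rw [transpose_nonsing_inv, hSsymm]
  -- Part 1 : νmin * (y ⬝ u) ≤ u ⬝ u
  have part1 : ∀ t, νmin * (y t ⬝ᵥ u t) ≤ u t ⬝ᵥ u t := by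
    intro t
    have h := hνlow (T *ᵥ y t)
    have hL : (T *ᵥ y t) ⬝ᵥ (T *ᵥ y t) = y t ⬝ᵥ u t := by
      rw [dot_symm'' T hTsymm (T *ᵥ y t) (y t), mulVec_mulVec, hTT]
    have hR : (T *ᵥ y t) ⬝ᵥ (Γ⁻¹ *ᵥ (T *ᵥ y t)) = u t ⬝ᵥ u t := by
      have ha : Γ⁻¹ *ᵥ (T *ᵥ y t) = T *ᵥ u t := by
        rw [mulVec_mulVec, ← hTT, mul_assoc, ← mulVec_mulVec, hTT]
      rw [ha, dot_symm'' T hTsymm (T *ᵥ y t) (u t), mulVec_mulVec, hTT]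
    rw [hL, hR] at h
    exact h
  -- Part 2 : bmin * (y ⬝ u) ≤ (Sg t *ᵥ u) ⬝ u
  have part2 : ∀ t, bmin * (y t ⬝ᵥ u t) ≤ (Sg t *ᵥ u t) ⬝ᵥ u t := by
    intro t
    have h := hSlow t (S *ᵥ u t)
    have hL : (S *ᵥ u t) ⬝ᵥ (S *ᵥ u t) = y t ⬝ᵥ u t := by
      rw [dot_symm'' S hSsymm (S *ᵥ u t) (u t), mulVec_mulVec, hSS, hu]
      rw [mulVec_mulVec, mul_nonsing_inv Γ hΓdet, one_mulVec, dotProduct_comm]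
    have hR : (S *ᵥ u t) ⬝ᵥ ((S⁻¹ * Sg t * S⁻¹) *ᵥ (S *ᵥ u t)) = (Sg t *ᵥ u t) ⬝ᵥ u t := by
      have ha : (S⁻¹ * Sg t * S⁻¹) *ᵥ (S *ᵥ u t) = S⁻¹ *ᵥ (Sg t *ᵥ u t) := by
        rw [mulVec_mulVec, mul_assoc (S⁻¹ * Sg t) S⁻¹ S, hSinvS, mul_one]
        rw [← mulVec_mulVec]
      rw [ha, dot_symm'' S⁻¹ hSinvSymm, mulVec_mulVec _ S⁻¹ S, hSinvS, one_mulVec]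
    rw [hL, hR] at h
    exact h
  -- derivative of f = H ∘ m
  have hf : ∀ t, HasDerivAt (fun s => H (m s))
      ((-(α • u t + β • (Sg t *ᵥ u t))) ⬝ᵥ (Γ⁻¹ *ᵥ y t)) t := by
    intro t
    have h := hasDerivAt_quad Γ⁻¹ hAsymm ((hm t).sub_const n)
    simpa only [hH] using h
  -- the key inequality on the derivative value
  have key : ∀ t, (-(α • u t + β • (Sg t *ᵥ u t))) ⬝ᵥ (Γ⁻¹ *ᵥ y t) ≤ -c * H (m t) := by
    intro t
    have hval : (-(α • u t + β • (Sg t *ᵥ u t))) ⬝ᵥ (Γ⁻¹ *ᵥ y t)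
        = -(α * (u t ⬝ᵥ u t) + β * ((Sg t *ᵥ u t) ⬝ᵥ u t)) := by
      rw [neg_dotProduct, add_dotProduct, smul_dotProduct, smul_dotProduct]
      simp [hu, smul_eq_mul]
    have hHval : H (m t) = (1/2 : ℝ) * (y t ⬝ᵥ u t) := by rw [hH]
    have h1 : α * (νmin * (y t ⬝ᵥ u t)) ≤ α * (u t ⬝ᵥ u t) :=
      mul_le_mul_of_nonneg_left (part1 t) hα
    have h2 : β * (bmin * (y t ⬝ᵥ u t)) ≤ β * ((Sg t *ᵥ u t) ⬝ᵥ u t) :=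
      mul_le_mul_of_nonneg_left (part2 t) hβ
    rw [hval, hHval, hc]
    nlinarith [h1, h2]
  constructor
  · intro t _
    rw [(hf t).deriv]
    exact key t
  · intro t ht
    -- Grönwall via monotonicity of g s = exp (c s) * H (m s)
    set g : ℝ → ℝ := fun s => Real.exp (c * s) * H (m s) with hg
    have hgderiv : ∀ s, HasDerivAt g
        (Real.exp (c * s) * c * H (m s)
          + Real.exp (c * s) * ((-(α • u s + β • (Sg s *ᵥ u s))) ⬝ᵥ (Γ⁻¹ *ᵥ y s))) s := by
      intro s
      have hexp : HasDerivAt (fun r => Real.exp (c * r)) (Real.exp (c * s) * c) s := by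
        have h0 : HasDerivAt (fun r : ℝ => c * r) c s := by
          simpa using (hasDerivAt_id s).const_mul c
        simpa using h0.exp
      exact hexp.mul (hf s)
    have hgdiff : Differentiable ℝ g := fun s => (hgderiv s).differentiableAt
    have hgmono : ∀ x, deriv g x ≤ 0 := by
      intro x
      rw [(hgderiv x).deriv]
      have hk := key x
      have hexppos : (0:ℝ) < Real.exp (c * x) := Real.exp_pos _
      nlinarith [mul_le_mul_of_nonneg_left hk hexppos.le]
    have hanti : Antitone g := by
      apply antitone_of_deriv_nonpos hgdiff hgmono
    have hgt : g t ≤ g 0 := hanti ht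
    have hg0 : g 0 = H (m 0) := by simp [hg]
    rw [hg0] at hgt
    have h1 : Real.exp (c * t) * H (m t) ≤ H (m 0) := hgt
    have h2 : Real.exp (-c * t) * (Real.exp (c * t) * H (m t))
        ≤ Real.exp (-c * t) * H (m 0) :=
      mul_le_mul_of_nonneg_left h1 (Real.exp_nonneg _)
    have hz : -c * t + c * t = 0 := by ring
    rw [← mul_assoc, ← Real.exp_add, hz, Real.exp_zero, one_mul] at h2
    exact h2
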